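/- Let j ≥ 1 and k ≥ 0 be integers, and let a_k^{(n)} (k, n ≥ 0) be complex numbers. Suppose there are nonzero complex numbers r_1, …, r_j with |r_1| > |r_2| > … > |r_j|, and that for each k' ∈ {k, k+1, …, k+j−1} there are nonzero complex constants c_{1,k'}, …, c_{j,k'}, reals ρ_{k'} with 0 < ρ_{k'} < |r_j| and μ_{k'} > 0, and a sequence (b_{k'}^{(n)})_{n≥0} with |b_{k'}^{(n)}| ≤ μ_{k'} ρ_{k'}^n, such that a_{k'}^{(n)} = Σ_{ℓ=1}^{j} c_{ℓ,k'} r_ℓ^{n+k'+1} + b_{k'}^{(n)} for all n ≥ 0. Define the constant c_{k,j} := Σ_{κ ∈ {1,…,j}^j} det M_κ, where M_κ is the j×j matrix whose (s, ℓ) entry, for s = 0, …, j−1 and ℓ = 1, …, j, is c_{κ_ℓ, k+ℓ−1} r_{κ_ℓ}^{k+ℓ+s}. Then there exists a constant K > 0 such that for all n ≥ 0, |C_{k,j}^{(n)} − c_{k,j} (r_1 r_2 ⋯ r_j)^n| ≤ K |r_1 r_2 ⋯ r_j|^n Σ_{ℓ=1}^{j} (ρ_{k+ℓ−1}/|r_j|)^n.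 -/

import Mathlib

/-- The Casorati determinant: `C_{k,0}^{(n)} = 1` and for `j ≥ 1`,
`C_{k,j}^{(n)} = det (a_{k+ℓ}^{(n+s)})_{s,ℓ = 0,…,j-1}`. -/
noncomputable def casorati (a : ℕ → ℕ → ℂ) (k j n : ℕ) : ℂ :=
  Matrix.det (Matrix.of fun s ℓ : Fin j => a (k + (ℓ : ℕ)) (n + (s : ℕ)))

open scoped Matrix

open Finset in
lemma my_norm_det_le {j : ℕ} (M : Matrix (Fin j) (Fin j) ℂ) (B : Fin j → ℝ)
    (h : ∀ ℓ s, ‖M ℓ s‖ ≤ B ℓ) :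
    ‖M.det‖ ≤ (Nat.factorial j : ℝ) * ∏ ℓ, B ℓ := by
  rw [Matrix.det_apply]
  calc ‖∑ σ : Equiv.Perm (Fin j), Equiv.Perm.sign σ • ∏ i, M (σ i) i‖
      ≤ ∑ σ : Equiv.Perm (Fin j), ‖Equiv.Perm.sign σ • ∏ i, M (σ i) i‖ := norm_sum_le _ _
    _ ≤ ∑ _σ : Equiv.Perm (Fin j), ∏ ℓ, B ℓ := by
        apply Finset.sum_le_sum; intro σ _
        have h1 : ‖Equiv.Perm.sign σ • ∏ i, M (σ i) i‖ = ‖∏ i, M (σ i) i‖ := by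
          rcases Int.units_eq_one_or (Equiv.Perm.sign σ) with hs | hs <;>
            simp [hs, Units.smul_def]
        rw [h1]
        calc ‖∏ i, M (σ i) i‖ = ∏ i, ‖M (σ i) i‖ := norm_prod _ _
          _ ≤ ∏ i, B (σ i) :=
              Finset.prod_le_prod (fun _ _ => norm_nonneg _) (fun i _ => h _ i)
          _ = ∏ ℓ, B ℓ := Equiv.prod_comp σ B
    _ = (Nat.factorial j : ℝ) * ∏ ℓ, B ℓ := by
        rw [Finset.sum_const, nsmul_eq_mul, Finset.card_univ, Fintype.card_perm,
          Fintype.card_fin]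

lemma my_det_eq_zero_of_smul_rows {j : ℕ} (M : Matrix (Fin j) (Fin j) ℂ) {ℓ ℓ' : Fin j}
    (hne : ℓ ≠ ℓ') (w : Fin j → ℂ) (x y : ℂ) (h1 : M ℓ = x • w) (h2 : M ℓ' = y • w) :
    M.det = 0 := by
  have e1 : M = Matrix.updateRow M ℓ (x • w) := by rw [← h1, Matrix.updateRow_eq_self]
  rw [e1, Matrix.det_updateRow_smul]
  set N := Matrix.updateRow M ℓ w with hN
  have e2 : N = Matrix.updateRow N ℓ' (y • w) := by
    have : N ℓ' = y • w := by rw [hN, Matrix.updateRow_ne (Ne.symm hne), h2]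
    rw [← this, Matrix.updateRow_eq_self]
  rw [e2, Matrix.det_updateRow_smul]
  have : (Matrix.updateRow N ℓ' w).det = 0 := by
    apply Matrix.det_zero_of_row_eq hne
    rw [Matrix.updateRow_ne hne, Matrix.updateRow_self, hN, Matrix.updateRow_self]
  rw [this]; ring

open Finset in
lemma my_key_ineq {j : ℕ} (R : ℝ) (hR : 0 < R) (w : Fin j → ℝ) (hw : ∀ i, R ≤ w i)
    (ρ' : Fin j → ℝ) (hρ0 : ∀ ℓ, 0 ≤ ρ' ℓ) (hρR : ∀ ℓ, ρ' ℓ ≤ R)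
    (φ : Fin j → Option (Fin j))
    (hinj : ∀ ℓ ℓ' i, φ ℓ = some i → φ ℓ' = some i → ℓ = ℓ')
    (ℓ0 : Fin j) (h0 : φ ℓ0 = none) :
    (∏ ℓ, (φ ℓ).elim (ρ' ℓ) (fun i => w i)) ≤ (∏ i, w i) * (ρ' ℓ0 / R) := by
  classical
  have hw0 : ∀ i, 0 ≤ w i := fun i => le_trans hR.le (hw i)
  set f : Fin j → ℝ := fun ℓ => (φ ℓ).elim (ρ' ℓ) (fun i => w i) with hf
  set S : Finset (Fin j) := Finset.univ.filter (fun ℓ => (φ ℓ).isSome) with hS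
  set U : Finset (Fin j) := Finset.univ.filter (fun ℓ => ¬ (φ ℓ).isSome) with hU
  set ψ : Fin j → Fin j := fun ℓ => (φ ℓ).getD ℓ0 with hψ
  have hsplit : (∏ ℓ, f ℓ) = (∏ ℓ ∈ S, f ℓ) * ∏ ℓ ∈ U, f ℓ :=
    (Finset.prod_filter_mul_prod_filter_not Finset.univ _ _).symm
  have hfS : ∀ ℓ ∈ S, f ℓ = w (ψ ℓ) := by
    intro ℓ hℓ
    rw [hS, Finset.mem_filter] at hℓ
    obtain ⟨i, hi⟩ := Option.isSome_iff_exists.mp hℓ.2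
    simp [hf, hψ, hi]
  have hfU : ∀ ℓ ∈ U, f ℓ = ρ' ℓ := by
    intro ℓ hℓ
    rw [hU, Finset.mem_filter] at hℓ
    have := Option.not_isSome_iff_eq_none.mp hℓ.2
    simp [hf, this]
  have hinjS : Set.InjOn ψ S := by
    intro x hx y hy hxy
    rw [hS, Finset.coe_filter] at hx hy
    obtain ⟨ix, hix⟩ := Option.isSome_iff_exists.mp hx.2
    obtain ⟨iy, hiy⟩ := Option.isSome_iff_exists.mp hy.2
    have hx' : ψ x = ix := by simp [hψ, hix]
    have hy' : ψ y = iy := by simp [hψ, hiy]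
    exact hinj x y ix hix (by rw [hiy, ← hy', ← hxy, hx'])
  set T : Finset (Fin j) := S.image ψ with hT
  have hprodS : (∏ ℓ ∈ S, f ℓ) = ∏ m ∈ T, w m := by
    rw [Finset.prod_congr rfl hfS, hT, Finset.prod_image (fun x hx y hy => hinjS hx hy)]
  have hcardT : T.card = S.card := Finset.card_image_of_injOn hinjS
  have hcardSU : S.card + U.card = j := by
    rw [hS, hU]
    rw [Finset.card_filter_add_card_filter_not]
    simp
  have hℓ0U : ℓ0 ∈ U := by simp [hU, h0]
  have hUcard : 1 ≤ U.card := Finset.card_pos.mpr ⟨ℓ0, hℓ0U⟩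
  have hwsplit : (∏ i, w i) = (∏ m ∈ T, w m) * ∏ m ∈ Finset.univ \ T, w m := by
    rw [mul_comm, Finset.prod_sdiff (Finset.subset_univ T)]
  have hcardTc : (Finset.univ \ T).card = U.card := by
    rw [Finset.card_sdiff_of_subset (Finset.subset_univ T), Finset.card_univ, Fintype.card_fin,
      hcardT]
    omega
  have hU1 : (∏ ℓ ∈ U, f ℓ) ≤ ρ' ℓ0 * R ^ (U.card - 1) := by
    rw [Finset.prod_congr rfl hfU, ← Finset.mul_prod_erase U ρ' hℓ0U]
    have h2 : (∏ ℓ ∈ U.erase ℓ0, ρ' ℓ) ≤ R ^ (U.card - 1) := by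
      calc (∏ ℓ ∈ U.erase ℓ0, ρ' ℓ) ≤ ∏ _ℓ ∈ U.erase ℓ0, R :=
          Finset.prod_le_prod (fun ℓ _ => hρ0 ℓ) (fun ℓ _ => hρR ℓ)
        _ = R ^ (U.erase ℓ0).card := by rw [Finset.prod_const]
        _ = R ^ (U.card - 1) := by rw [Finset.card_erase_of_mem hℓ0U]
    exact mul_le_mul_of_nonneg_left h2 (hρ0 ℓ0)
  have hT1 : R ^ U.card ≤ ∏ m ∈ Finset.univ \ T, w m := by
    calc R ^ U.card = ∏ _m ∈ Finset.univ \ T, R := by rw [Finset.prod_const, hcardTc]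
      _ ≤ ∏ m ∈ Finset.univ \ T, w m :=
          Finset.prod_le_prod (fun _ _ => hR.le) (fun m _ => hw m)
  have key : (∏ ℓ ∈ U, f ℓ) ≤ (∏ m ∈ Finset.univ \ T, w m) * (ρ' ℓ0 / R) := by
    calc (∏ ℓ ∈ U, f ℓ) ≤ ρ' ℓ0 * R ^ (U.card - 1) := hU1
      _ = R ^ U.card * (ρ' ℓ0 / R) := by
          have : U.card = (U.card - 1) + 1 := by omega
          rw [this, Nat.add_sub_cancel, pow_succ]
          field_simp
      _ ≤ (∏ m ∈ Finset.univ \ T, w m) * (ρ' ℓ0 / R) := by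
          apply mul_le_mul_of_nonneg_right hT1
          exact div_nonneg (hρ0 ℓ0) hR.le
  calc (∏ ℓ, f ℓ) = (∏ m ∈ T, w m) * ∏ ℓ ∈ U, f ℓ := by rw [hsplit, hprodS]
    _ ≤ (∏ m ∈ T, w m) * ((∏ m ∈ Finset.univ \ T, w m) * (ρ' ℓ0 / R)) := by
        apply mul_le_mul_of_nonneg_left key
        exact Finset.prod_nonneg (fun m _ => hw0 m)
    _ = (∏ i, w i) * (ρ' ℓ0 / R) := by rw [hwsplit]; ring

lemma my_det_rows_sum {j : ℕ} (g : Fin j → Option (Fin j) → Fin j → ℂ) :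
    Matrix.det (Matrix.of fun ℓ s : Fin j => ∑ o : Option (Fin j), g ℓ o s)
      = ∑ φ : Fin j → Option (Fin j), Matrix.det (Matrix.of fun ℓ s => g ℓ (φ ℓ) s) := by
  have h : (Matrix.of fun ℓ s : Fin j => ∑ o : Option (Fin j), g ℓ o s)
      = fun ℓ => ∑ o : Option (Fin j), g ℓ o := by
    funext ℓ s
    simp [Matrix.of_apply, Finset.sum_apply]
  calc Matrix.det (Matrix.of fun ℓ s : Fin j => ∑ o : Option (Fin j), g ℓ o s)
      = Matrix.detRowAlternating (fun ℓ : Fin j => ∑ o : Option (Fin j), g ℓ o) := by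
        rw [← h]; rfl
    _ = ∑ φ : Fin j → Option (Fin j),
          Matrix.detRowAlternating (fun ℓ : Fin j => g ℓ (φ ℓ)) :=
        (Matrix.detRowAlternating (R := ℂ) (n := Fin j)).toMultilinearMap.map_sum
          (α := fun _ => Option (Fin j)) (g := g)
    _ = _ := rfl

lemma my_pow_le {x : ℝ} (hx : 0 ≤ x) {s j : ℕ} (hs : s ≤ j) : x ^ s ≤ max 1 x ^ j :=
  calc x ^ s ≤ max 1 x ^ s := pow_le_pow_left₀ hx (le_max_right 1 x) s
    _ ≤ max 1 x ^ j := pow_le_pow_right₀ (le_max_left 1 x) hs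

/- STATEMENT 2: asymptotic expansion of the Casorati determinant when the poles
do not depend on k'. -/
theorem casorati_asymptotic_restricted
    (j k : ℕ) (hj : 1 ≤ j)
    (a b : ℕ → ℕ → ℂ)
    (r : Fin j → ℂ) (c : ℕ → Fin j → ℂ) (ρ μ : ℕ → ℝ)
    (hr0 : ∀ ℓ, r ℓ ≠ 0)
    (hrdec : ∀ ℓ₁ ℓ₂ : Fin j, ℓ₁ < ℓ₂ → ‖r ℓ₂‖ < ‖r ℓ₁‖)
    (hc : ∀ d < j, ∀ ℓ, c (k + d) ℓ ≠ 0)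
    (hρpos : ∀ d < j, 0 < ρ (k + d))
    (hρlt : ∀ d < j, ρ (k + d) < ‖r ⟨j - 1, by omega⟩‖)
    (hμ : ∀ d < j, 0 < μ (k + d))
    (hb : ∀ d < j, ∀ n : ℕ, ‖b (k + d) n‖ ≤ μ (k + d) * ρ (k + d) ^ n)
    (ha : ∀ d < j, ∀ n : ℕ,
      a (k + d) n = (∑ ℓ, c (k + d) ℓ * r ℓ ^ (n + (k + d) + 1)) + b (k + d) n) :
    ∃ K > 0, ∀ n : ℕ,
      ‖casorati a k j n -
        (∑ κ : Fin j → Fin j,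
          Matrix.det (Matrix.of fun s ℓ : Fin j =>
            c (k + (ℓ : ℕ)) (κ ℓ) * r (κ ℓ) ^ (k + (ℓ : ℕ) + 1 + (s : ℕ)))) *
          (∏ ℓ : Fin j, r ℓ) ^ n‖ ≤
      K * ‖∏ ℓ : Fin j, r ℓ‖ ^ n *
        ∑ ℓ : Fin j, (ρ (k + (ℓ : ℕ)) / ‖r ⟨j - 1, by omega⟩‖) ^ n := by
  classical
  set R : ℝ := ‖r ⟨j - 1, by omega⟩‖ with hRdef
  have hRpos : 0 < R := norm_pos_iff.mpr (hr0 _)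
  have hRle : ∀ i : Fin j, R ≤ ‖r i‖ := by
    intro i
    by_cases h : (i : ℕ) = j - 1
    · have : i = ⟨j - 1, by omega⟩ := Fin.ext h
      rw [this]
    · refine (hrdec i ⟨j - 1, by omega⟩ ?_).le
      rw [Fin.lt_def]
      have := i.isLt
      simp only []
      omega
  -- constants
  set P : Fin j → Option (Fin j) → ℝ := fun ℓ o =>
    o.elim (μ (k + ℓ) * max 1 (ρ (k + ℓ)) ^ j)
      (fun i => ‖c (k + ℓ) i‖ * ‖r i‖ ^ (k + (ℓ : ℕ) + 1) * max 1 ‖r i‖ ^ j) with hPdef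
  have hP0 : ∀ ℓ o, 0 ≤ P ℓ o := by
    intro ℓ o
    cases o with
    | none =>
        exact mul_nonneg (hμ ℓ ℓ.isLt).le
          (pow_nonneg (le_trans zero_le_one (le_max_left _ _)) _)
    | some i =>
        exact mul_nonneg (mul_nonneg (norm_nonneg _) (pow_nonneg (norm_nonneg _) _))
          (pow_nonneg (le_trans zero_le_one (le_max_left _ _)) _)
  set A : Finset (Fin j → Option (Fin j)) :=
    Finset.univ.image (fun κ : Fin j → Fin j => fun ℓ => some (κ ℓ)) with hAdef
  set Bad : Finset (Fin j → Option (Fin j)) := Finset.univ \ A with hBadDef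
  set coef : (Fin j → Option (Fin j)) → ℝ :=
    fun φ => (Nat.factorial j : ℝ) * ∏ ℓ, P ℓ (φ ℓ) with hcoefDef
  have hcoef0 : ∀ φ, 0 ≤ coef φ :=
    fun φ => mul_nonneg (Nat.cast_nonneg _) (Finset.prod_nonneg fun ℓ _ => hP0 ℓ (φ ℓ))
  have hKpos : 0 < (∑ φ ∈ Bad, coef φ) + 1 := by
    have := Finset.sum_nonneg (fun φ (_ : φ ∈ Bad) => hcoef0 φ)
    linarith
  refine ⟨(∑ φ ∈ Bad, coef φ) + 1, hKpos, ?_⟩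
  intro n
  -- the row decomposition
  set g : Fin j → Option (Fin j) → Fin j → ℂ := fun ℓ o s =>
    o.elim (b (k + ℓ) (n + s))
      (fun i => c (k + ℓ) i * r i ^ ((n + (s : ℕ)) + (k + (ℓ : ℕ)) + 1)) with hgdef
  set D : (Fin j → Option (Fin j)) → ℂ :=
    fun φ => Matrix.det (Matrix.of fun ℓ s => g ℓ (φ ℓ) s) with hDdef
  -- step 1 : expansion of the Casorati determinant
  have step1 : casorati a k j n = ∑ φ : Fin j → Option (Fin j), D φ := by
    have e0 : casorati a k j n
        = Matrix.det (Matrix.of fun ℓ s : Fin j => a (k + (ℓ : ℕ)) (n + (s : ℕ))) := by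
      unfold casorati
      rw [show (Matrix.of fun s ℓ : Fin j => a (k + (ℓ : ℕ)) (n + (s : ℕ)))
          = (Matrix.of fun ℓ s : Fin j => a (k + (ℓ : ℕ)) (n + (s : ℕ)))ᵀ from rfl,
        Matrix.det_transpose]
    have e1 : (Matrix.of fun ℓ s : Fin j => a (k + (ℓ : ℕ)) (n + (s : ℕ)))
        = (Matrix.of fun ℓ s : Fin j => ∑ o : Option (Fin j), g ℓ o s) := by
      ext ℓ s
      simp only [Matrix.of_apply]
      rw [ha ℓ ℓ.isLt (n + s), Fintype.sum_option]
      simp only [hgdef, Option.elim]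
      ring
    rw [e0, e1, my_det_rows_sum]
  -- step 2 : the main term
  have sum_image : ∑ φ ∈ A, D φ = ∑ κ : Fin j → Fin j, D (fun ℓ => some (κ ℓ)) := by
    rw [hAdef, Finset.sum_image
      (fun x _ y _ h => funext fun ℓ => Option.some_injective _ (congrFun h ℓ))]
  have hκ : ∀ κ : Fin j → Fin j,
      D (fun ℓ => some (κ ℓ))
      = Matrix.det (Matrix.of fun s ℓ : Fin j =>
            c (k + (ℓ : ℕ)) (κ ℓ) * r (κ ℓ) ^ (k + (ℓ : ℕ) + 1 + (s : ℕ)))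
          * (∏ ℓ : Fin j, r ℓ) ^ n := by
    intro κ
    have et : (Matrix.of fun ℓ s : Fin j => g ℓ (some (κ ℓ)) s)
        = (Matrix.of fun s ℓ : Fin j =>
          (r (κ ℓ) ^ n) * (c (k + (ℓ : ℕ)) (κ ℓ) * r (κ ℓ) ^ (k + (ℓ : ℕ) + 1 + (s : ℕ))))ᵀ := by
      ext ℓ s
      simp only [Matrix.of_apply, Matrix.transpose_apply, hgdef, Option.elim]
      rw [show (n + (s : ℕ)) + (k + (ℓ : ℕ)) + 1 = n + (k + (ℓ : ℕ) + 1 + (s : ℕ)) by omega,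
        pow_add]
      ring
    have e0 : D (fun ℓ => some (κ ℓ))
        = Matrix.det (Matrix.of fun s ℓ : Fin j =>
            (r (κ ℓ) ^ n) * (c (k + (ℓ : ℕ)) (κ ℓ) * r (κ ℓ) ^ (k + (ℓ : ℕ) + 1 + (s : ℕ)))) := by
      rw [hDdef]
      simp only []
      rw [et, Matrix.det_transpose]
    have hmr := Matrix.det_mul_row (fun ℓ : Fin j => r (κ ℓ) ^ n)
      ((fun s ℓ : Fin j => c (k + (ℓ : ℕ)) (κ ℓ) * r (κ ℓ) ^ (k + (ℓ : ℕ) + 1 + (s : ℕ))) :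
        Matrix (Fin j) (Fin j) ℂ)
    beta_reduce at hmr
    rw [e0, hmr]
    have hof : (Matrix.det fun s ℓ : Fin j =>
        c (k + (ℓ : ℕ)) (κ ℓ) * r (κ ℓ) ^ (k + (ℓ : ℕ) + 1 + (s : ℕ)))
        = Matrix.det (Matrix.of fun s ℓ : Fin j =>
        c (k + (ℓ : ℕ)) (κ ℓ) * r (κ ℓ) ^ (k + (ℓ : ℕ) + 1 + (s : ℕ))) := rfl
    rw [hof]
    by_cases hinj : Function.Injective κ
    · have hbij : Function.Bijective κ := Finite.injective_iff_bijective.mp hinj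
      have hprod : (∏ ℓ, r (κ ℓ)) = ∏ ℓ, r ℓ :=
        Fintype.prod_bijective κ hbij _ _ (fun _ => rfl)
      rw [Finset.prod_pow, hprod, mul_comm]
    · obtain ⟨ℓ1, ℓ2, hval, hne⟩ : ∃ ℓ1 ℓ2, κ ℓ1 = κ ℓ2 ∧ ℓ1 ≠ ℓ2 := by
        unfold Function.Injective at hinj
        push_neg at hinj
        exact hinj
      have hdet0 : Matrix.det (Matrix.of fun s ℓ : Fin j =>
          c (k + (ℓ : ℕ)) (κ ℓ) * r (κ ℓ) ^ (k + (ℓ : ℕ) + 1 + (s : ℕ))) = 0 := by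
        rw [show (Matrix.of fun s ℓ : Fin j =>
            c (k + (ℓ : ℕ)) (κ ℓ) * r (κ ℓ) ^ (k + (ℓ : ℕ) + 1 + (s : ℕ)))
            = (Matrix.of fun ℓ s : Fin j =>
            c (k + (ℓ : ℕ)) (κ ℓ) * r (κ ℓ) ^ (k + (ℓ : ℕ) + 1 + (s : ℕ)))ᵀ from rfl,
          Matrix.det_transpose]
        apply my_det_eq_zero_of_smul_rows _ hne (fun s : Fin j => r (κ ℓ1) ^ (s : ℕ))
          (c (k + (ℓ1 : ℕ)) (κ ℓ1) * r (κ ℓ1) ^ (k + (ℓ1 : ℕ) + 1))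
          (c (k + (ℓ2 : ℕ)) (κ ℓ2) * r (κ ℓ2) ^ (k + (ℓ2 : ℕ) + 1))
        · funext s
          simp only [Matrix.of_apply, Pi.smul_apply, smul_eq_mul]
          rw [pow_add]
          ring
        · funext s
          simp only [Matrix.of_apply, Pi.smul_apply, smul_eq_mul, ← hval]
          rw [pow_add]
          ring
      rw [hdet0]
      ring
  have mainA : ∑ φ ∈ A, D φ
      = (∑ κ : Fin j → Fin j,
          Matrix.det (Matrix.of fun s ℓ : Fin j =>
            c (k + (ℓ : ℕ)) (κ ℓ) * r (κ ℓ) ^ (k + (ℓ : ℕ) + 1 + (s : ℕ))))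
        * (∏ ℓ : Fin j, r ℓ) ^ n := by
    rw [sum_image, Finset.sum_congr rfl (fun κ _ => hκ κ), ← Finset.sum_mul]
  have splitsum : (∑ φ : Fin j → Option (Fin j), D φ)
      = (∑ φ ∈ Bad, D φ) + ∑ φ ∈ A, D φ := by
    rw [hBadDef]
    exact (Finset.sum_sdiff (Finset.subset_univ A)).symm
  have diff : casorati a k j n -
      (∑ κ : Fin j → Fin j,
          Matrix.det (Matrix.of fun s ℓ : Fin j =>
            c (k + (ℓ : ℕ)) (κ ℓ) * r (κ ℓ) ^ (k + (ℓ : ℕ) + 1 + (s : ℕ))))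
        * (∏ ℓ : Fin j, r ℓ) ^ n = ∑ φ ∈ Bad, D φ := by
    rw [step1, splitsum, ← mainA]
    ring
  rw [diff]
  -- the error bound
  set common : ℝ := ‖∏ ℓ : Fin j, r ℓ‖ ^ n
      * ∑ ℓ : Fin j, (ρ (k + (ℓ : ℕ)) / R) ^ n with hcommonDef
  have hcommon0 : 0 ≤ common :=
    mul_nonneg (pow_nonneg (norm_nonneg _) _)
      (Finset.sum_nonneg fun ℓ _ =>
        pow_nonneg (div_nonneg (hρpos ℓ ℓ.isLt).le hRpos.le) _)
  have hBadnone : ∀ φ ∈ Bad, ∃ ℓ0, φ ℓ0 = none := by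
    intro φ hφ
    by_contra h
    push_neg at h
    have h2 : ∀ ℓ, ∃ i, φ ℓ = some i := fun ℓ => Option.ne_none_iff_exists'.mp (h ℓ)
    choose κ hκ2 using h2
    have : φ ∈ A := Finset.mem_image.mpr
      ⟨κ, Finset.mem_univ _, funext fun ℓ => (hκ2 ℓ).symm⟩
    exact (Finset.mem_sdiff.mp hφ).2 this
  have hφbound : ∀ φ ∈ Bad, ‖D φ‖ ≤ coef φ * common := by
    intro φ hφ
    obtain ⟨ℓ0, h0⟩ := hBadnone φ hφ
    by_cases hinj : ∀ ℓ ℓ' i, φ ℓ = some i → φ ℓ' = some i → ℓ = ℓ'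
    · -- injective case : genuine bound
      set τ : Fin j → ℝ := fun ℓ => (φ ℓ).elim (ρ (k + (ℓ : ℕ))) (fun i => ‖r i‖) with hτdef
      have hτ0 : ∀ ℓ, 0 ≤ τ ℓ := by
        intro ℓ
        cases hφℓ : φ ℓ with
        | none => simp [hτdef, hφℓ, (hρpos ℓ ℓ.isLt).le]
        | some i => simp [hτdef, hφℓ]
      have hB : ∀ ℓ s : Fin j, ‖(Matrix.of fun ℓ s => g ℓ (φ ℓ) s) ℓ s‖
          ≤ P ℓ (φ ℓ) * τ ℓ ^ n := by
        intro ℓ s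
        cases hφℓ : φ ℓ with
        | none =>
            simp only [Matrix.of_apply, hgdef, hτdef, hPdef, hφℓ, Option.elim]
            calc ‖b (k + ℓ) (n + s)‖ ≤ μ (k + ℓ) * ρ (k + ℓ) ^ (n + (s : ℕ)) :=
                hb ℓ ℓ.isLt (n + s)
              _ = (μ (k + ℓ) * ρ (k + ℓ) ^ (s : ℕ)) * ρ (k + ℓ) ^ n := by
                  rw [pow_add]; ring
              _ ≤ (μ (k + ℓ) * max 1 (ρ (k + ℓ)) ^ j) * ρ (k + ℓ) ^ n := by
                  apply mul_le_mul_of_nonneg_right _ (pow_nonneg (hρpos ℓ ℓ.isLt).le n)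
                  exact mul_le_mul_of_nonneg_left
                    (my_pow_le (hρpos ℓ ℓ.isLt).le s.isLt.le) (hμ ℓ ℓ.isLt).le
        | some i =>
            simp only [Matrix.of_apply, hgdef, hτdef, hPdef, hφℓ, Option.elim]
            rw [norm_mul, norm_pow]
            rw [show (n + (s : ℕ)) + (k + (ℓ : ℕ)) + 1
                = (k + (ℓ : ℕ) + 1) + (s : ℕ) + n by omega, pow_add, pow_add]
            calc ‖c (k + ℓ) i‖ * (‖r i‖ ^ (k + (ℓ : ℕ) + 1) * ‖r i‖ ^ (s : ℕ) * ‖r i‖ ^ n)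
                = (‖c (k + ℓ) i‖ * ‖r i‖ ^ (k + (ℓ : ℕ) + 1) * ‖r i‖ ^ (s : ℕ)) * ‖r i‖ ^ n := by
                  ring
              _ ≤ (‖c (k + ℓ) i‖ * ‖r i‖ ^ (k + (ℓ : ℕ) + 1) * max 1 ‖r i‖ ^ j) * ‖r i‖ ^ n := by
                  apply mul_le_mul_of_nonneg_right _ (pow_nonneg (norm_nonneg _) n)
                  exact mul_le_mul_of_nonneg_left (my_pow_le (norm_nonneg _) s.isLt.le)
                    (mul_nonneg (norm_nonneg _) (pow_nonneg (norm_nonneg _) _))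
      have hdetb : ‖D φ‖ ≤ (Nat.factorial j : ℝ) * ∏ ℓ, (P ℓ (φ ℓ) * τ ℓ ^ n) :=
        my_norm_det_le _ _ hB
      have hstep : ‖D φ‖ ≤ coef φ * (∏ ℓ, τ ℓ) ^ n := by
        calc ‖D φ‖ ≤ (Nat.factorial j : ℝ) * ∏ ℓ, (P ℓ (φ ℓ) * τ ℓ ^ n) := hdetb
          _ = coef φ * (∏ ℓ, τ ℓ) ^ n := by
              rw [Finset.prod_mul_distrib, Finset.prod_pow, hcoefDef]
              ring
      have hτle : (∏ ℓ, τ ℓ) ^ n ≤ common := by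
        have k1 : (∏ ℓ, τ ℓ) ≤ (∏ i, ‖r i‖) * (ρ (k + (ℓ0 : ℕ)) / R) :=
          my_key_ineq R hRpos (fun i => ‖r i‖) hRle (fun ℓ => ρ (k + (ℓ : ℕ)))
            (fun ℓ => (hρpos ℓ ℓ.isLt).le) (fun ℓ => (hρlt ℓ ℓ.isLt).le) φ hinj ℓ0 h0
        calc (∏ ℓ, τ ℓ) ^ n ≤ ((∏ i, ‖r i‖) * (ρ (k + (ℓ0 : ℕ)) / R)) ^ n :=
            pow_le_pow_left₀ (Finset.prod_nonneg fun ℓ _ => hτ0 ℓ) k1 n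
          _ = (∏ i, ‖r i‖) ^ n * (ρ (k + (ℓ0 : ℕ)) / R) ^ n := mul_pow _ _ n
          _ = ‖∏ i, r i‖ ^ n * (ρ (k + (ℓ0 : ℕ)) / R) ^ n := by rw [norm_prod]
          _ ≤ ‖∏ i, r i‖ ^ n * ∑ ℓ : Fin j, (ρ (k + (ℓ : ℕ)) / R) ^ n := by
              apply mul_le_mul_of_nonneg_left _ (pow_nonneg (norm_nonneg _) n)
              exact Finset.single_le_sum
                (fun (ℓ : Fin j) _ => pow_nonneg
                  (div_nonneg (hρpos ℓ ℓ.isLt).le hRpos.le) n)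
                (Finset.mem_univ ℓ0)
          _ = common := rfl
      calc ‖D φ‖ ≤ coef φ * (∏ ℓ, τ ℓ) ^ n := hstep
        _ ≤ coef φ * common := mul_le_mul_of_nonneg_left hτle (hcoef0 φ)
    · -- two rows proportional : the determinant vanishes
      push_neg at hinj
      obtain ⟨ℓ1, ℓ2, i, h1, h2, hne⟩ := hinj
      have hD0 : D φ = 0 := by
        rw [hDdef]
        apply my_det_eq_zero_of_smul_rows _ hne (fun s : Fin j => r i ^ (n + (s : ℕ)))
          (c (k + (ℓ1 : ℕ)) i * r i ^ (k + (ℓ1 : ℕ) + 1))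
          (c (k + (ℓ2 : ℕ)) i * r i ^ (k + (ℓ2 : ℕ) + 1))
        · funext s
          simp only [Matrix.of_apply, hgdef, h1, Option.elim, Pi.smul_apply, smul_eq_mul]
          rw [show (n + (s : ℕ)) + (k + (ℓ1 : ℕ)) + 1
              = (k + (ℓ1 : ℕ) + 1) + (n + (s : ℕ)) by omega, pow_add]
          ring
        · funext s
          simp only [Matrix.of_apply, hgdef, h2, Option.elim, Pi.smul_apply, smul_eq_mul]
          rw [show (n + (s : ℕ)) + (k + (ℓ2 : ℕ)) + 1
              = (k + (ℓ2 : ℕ) + 1) + (n + (s : ℕ)) by omega, pow_add]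
          ring
      rw [hD0, norm_zero]
      exact mul_nonneg (hcoef0 φ) hcommon0
  calc ‖∑ φ ∈ Bad, D φ‖ ≤ ∑ φ ∈ Bad, ‖D φ‖ := norm_sum_le _ _
    _ ≤ ∑ φ ∈ Bad, coef φ * common := Finset.sum_le_sum hφbound
    _ = (∑ φ ∈ Bad, coef φ) * common := (Finset.sum_mul _ _ _).symm
    _ ≤ ((∑ φ ∈ Bad, coef φ) + 1) * common := by
        apply mul_le_mul_of_nonneg_right _ hcommon0
        linarith
    _ = ((∑ φ ∈ Bad, coef φ) + 1) * ‖∏ ℓ : Fin j, r ℓ‖ ^ n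
        * ∑ ℓ : Fin j, (ρ (k + (ℓ : ℕ)) / R) ^ n := by
        rw [hcommonDef]; ring
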